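/- Let R be a commutative ring with sdim(R) = d such that the stable range condition sr_{d+1}(R) holds. Let S, T be unimodular rows of length n over R (i.e. S, T ∈ Um_n(R)). If (g, s₂,…,sₙ) and (−g, t₂,…,tₙ) are unimodular rows of length n over R, then the row (s₃,…,sₙ, t₃,…,tₙ, s₂t₂, g) of length 2n−2 is unimodular. -/

import Mathlib

/-- A row `v` of length `n` over a commutative ring is *unimodular* if there is a row `w`
with `∑ i, v i * w i = 1`. -/
def IsUnimodular {R : Type*} [CommRing R] {n : ℕ} (v : Fin n → R) : Prop :=
  ∃ w : Fin n → R, ∑ i, v i * w i = 1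

/-- `ε` lies in the elementary group `E_n(R)`, i.e. the (sub)group of `GL_n(R)` generated by
the elementary matrices `e_{ij}(λ) = I + λ E_{ij}` (`i ≠ j`).  Since the generating set is
closed under inverses, this coincides with the multiplicative closure. -/
def IsElementary {R : Type*} [CommRing R] {n : ℕ} (ε : Matrix (Fin n) (Fin n) R) : Prop :=
  ε ∈ Submonoid.closure {M : Matrix (Fin n) (Fin n) R |
    ∃ (i j : Fin n) (c : R), i ≠ j ∧ M = Matrix.transvection i j c}

/-- An `m × n` matrix is right invertible (i.e. lies in `Um_{m,n}(R)`) if it has a right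
inverse. -/
def RightInvertible {R : Type*} [CommRing R] {m n : ℕ} (A : Matrix (Fin m) (Fin n) R) : Prop :=
  ∃ B : Matrix (Fin n) (Fin m) R, A * B = 1

/-- The stable range condition `sr_k(R)`. -/
def SRCond (R : Type*) [CommRing R] (k : ℕ) : Prop :=
  ∀ a : Fin (k + 1) → R, IsUnimodular a →
    ∃ c : Fin k → R, IsUnimodular (fun i : Fin k => a i.castSucc + c i * a (Fin.last k))

/-- Let `R` be a commutative ring with `sdim R = d` such that the stable range condition
`sr_{d+1}(R)` holds, and let `S, T ∈ Um_n(R)` with `n = k + 2`.  If `(g, s₂,…,sₙ)` and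
`(−g, t₂,…,tₙ)` are unimodular rows of length `n`, then the row
`(s₃,…,sₙ, t₃,…,tₙ, s₂t₂, g)` of length `2n − 2` is unimodular. -/
theorem unimodular_combined_row {R : Type*} [CommRing R]
    (d k : ℕ) (hsr : SRCond R (d + 1))
    (S T : Fin (k + 2) → R) (hS : IsUnimodular S) (hT : IsUnimodular T)
    (g : R) (s t : Fin (k + 1) → R)
    (hgs : IsUnimodular (Fin.cons g s)) (hgt : IsUnimodular (Fin.cons (-g) t)) :
    IsUnimodular (Fin.append (Fin.append (Fin.tail s) (Fin.tail t)) ![s 0 * t 0, g]) := by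
  set v : Fin (k + k + 2) → R :=
    Fin.append (Fin.append (Fin.tail s) (Fin.tail t)) ![s 0 * t 0, g] with hv
  set I : Ideal R := Ideal.span (Set.range v) with hI
  have hg : g ∈ I := Ideal.subset_span ⟨Fin.natAdd (k + k) 1, by
    simp [hv, Fin.append_right]⟩
  have hst0 : s 0 * t 0 ∈ I := Ideal.subset_span ⟨Fin.natAdd (k + k) 0, by
    simp [hv, Fin.append_right]⟩
  have hs : ∀ i : Fin k, s i.succ ∈ I := fun i => Ideal.subset_span
    ⟨Fin.castAdd 2 (Fin.castAdd k i), by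
      rw [hv, Fin.append_left, Fin.append_left]; rfl⟩
  have ht : ∀ j : Fin k, t j.succ ∈ I := fun j => Ideal.subset_span
    ⟨Fin.castAdd 2 (Fin.natAdd k j), by
      rw [hv, Fin.append_left, Fin.append_right]; rfl⟩
  have hst : ∀ i j : Fin (k + 1), s i * t j ∈ I := by
    intro i j
    induction i using Fin.cases with
    | zero =>
      induction j using Fin.cases with
      | zero => exact hst0
      | succ j => exact Ideal.mul_mem_left _ _ (ht j)
    | succ i => exact Ideal.mul_mem_right _ _ (hs i)
  obtain ⟨a, ha⟩ := hgs
  obtain ⟨b, hb⟩ := hgt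
  rw [Fin.sum_univ_succ] at ha hb
  simp only [Fin.cons_zero, Fin.cons_succ] at ha hb
  set A : R := ∑ i : Fin (k + 1), s i * a i.succ with hA
  set B : R := ∑ j : Fin (k + 1), t j * b j.succ with hB
  have hAB : A * B ∈ I := by
    rw [hA, Finset.sum_mul]
    refine Ideal.sum_mem _ fun i _ => ?_
    rw [hB, Finset.mul_sum]
    refine Ideal.sum_mem _ fun j _ => ?_
    have : s i * a i.succ * (t j * b j.succ) = s i * t j * (a i.succ * b j.succ) := by ring
    rw [this]
    exact Ideal.mul_mem_right _ _ (hst i j)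
  have hone : (1 : R) ∈ I := by
    have key : (1 : R) = g * (a 0 * (-g * b 0 + B) - A * b 0) + A * B := by
      calc (1 : R) = (g * a 0 + A) * (-g * b 0 + B) := by rw [ha, hb, one_mul]
        _ = g * (a 0 * (-g * b 0 + B) - A * b 0) + A * B := by ring
    rw [key]
    exact I.add_mem (Ideal.mul_mem_right _ _ hg) hAB
  rw [hI] at hone
  obtain ⟨c, hc⟩ := (Submodule.mem_span_range_iff_exists_fun R).1 hone
  exact ⟨c, by simpa only [smul_eq_mul, mul_comm] using hc⟩
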